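/- Let R be a commutative ring, A an m×n matrix over R, k ≥ 1, and let α : Fin k → Fin m and β : Fin k → Fin n be strictly increasing. Then every entry of the m×n matrix μ_{α,β}(A)·A − A·Adj_{α,β}(A)·A lies in the determinantal ideal D_{k+1}(A). -/

import Mathlib

open Matrix Polynomial

/-- The `k`-th determinantal ideal of a matrix: the ideal generated by all
`k × k` minors (determinants of submatrices on strictly increasing row and
column selections). -/
noncomputable def detIdeal {R : Type*} [CommRing R] {m n : ℕ} (k : ℕ)
    (A : Matrix (Fin m) (Fin n) R) : Ideal R :=
  Ideal.span {x | ∃ (α : Fin k → Fin m) (β : Fin k → Fin n),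
    StrictMono α ∧ StrictMono β ∧ x = (A.submatrix α β).det}

/-- `Adj_{α,β}(A) = (I_n)_{·,β} · adjugate(A_{α,β}) · (I_m)_{α,·}`. -/
noncomputable def adjSub {R : Type*} [CommRing R] {m n k : ℕ}
    (A : Matrix (Fin m) (Fin n) R) (α : Fin k → Fin m) (β : Fin k → Fin n) :
    Matrix (Fin n) (Fin m) R :=
  (1 : Matrix (Fin n) (Fin n) R).submatrix id β * (A.submatrix α β).adjugate *
    (1 : Matrix (Fin m) (Fin m) R).submatrix α id

section Aux

variable {R : Type*} [CommRing R]

private lemma bordered_aux {l : ℕ} (M : Matrix (Fin l) (Fin l) R)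
    (r : Matrix (Fin l) (Fin 1) R) (c : Matrix (Fin 1) (Fin l) R) (x : Matrix (Fin 1) (Fin 1) R)
    (hd : IsLeftRegular M.det) :
    (Matrix.fromBlocks M r c x).det = x 0 0 * M.det - (c * M.adjugate * r) 0 0 := by
  have key : (Matrix.fromBlocks (1 : Matrix (Fin l) (Fin l) R) 0 (-(c * M.adjugate)) (M.det • 1)) *
      Matrix.fromBlocks M r c x
      = Matrix.fromBlocks M r 0 (M.det • x - c * M.adjugate * r) := by
    rw [Matrix.fromBlocks_multiply]
    simp [Matrix.mul_assoc, Matrix.adjugate_mul, Matrix.mul_smul, Matrix.smul_mul,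
      sub_eq_neg_add]
  have h2 := congrArg Matrix.det key
  rw [Matrix.det_mul, Matrix.det_fromBlocks_zero₁₂, Matrix.det_fromBlocks_zero₂₁,
    Matrix.det_one, one_mul] at h2
  apply hd
  show M.det * _ = M.det * _
  rw [Matrix.det_fin_one, Matrix.det_fin_one] at h2
  simp only [Matrix.smul_apply, Matrix.one_apply_eq, smul_eq_mul, mul_one, Matrix.sub_apply] at h2
  rw [h2]
  ring

private lemma bordered {l : ℕ} (M : Matrix (Fin l) (Fin l) R)
    (r : Matrix (Fin l) (Fin 1) R) (c : Matrix (Fin 1) (Fin l) R) (x : Matrix (Fin 1) (Fin 1) R) :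
    (Matrix.fromBlocks M r c x).det = x 0 0 * M.det - (c * M.adjugate * r) 0 0 := by
  let φ : R[X] →+* R := evalRingHom 0
  let M' : Matrix (Fin l) (Fin l) R[X] := (X : R[X]) • 1 + M.map C
  have hM' : M'.map φ = M := by
    ext i j
    simp [M', φ, Matrix.one_apply, apply_ite]
  have hreg : IsLeftRegular M'.det := by
    have : M'.det.Monic := by
      rw [Polynomial.Monic.def, leadingCoeff_det_X_one_add_C]
    exact this.isRegular.left
  have h := bordered_aux M' (r.map C) (c.map C) (x.map C) hreg
  have h2 := congrArg φ h
  rw [RingHom.map_det] at h2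
  rw [_root_.map_sub, _root_.map_mul, RingHom.map_det] at h2
  rw [RingHom.mapMatrix_apply, RingHom.mapMatrix_apply, Matrix.fromBlocks_map] at h2
  have hmapmul : ∀ (P : Matrix (Fin 1) (Fin l) R[X]) (Q : Matrix (Fin l) (Fin l) R[X])
      (T : Matrix (Fin l) (Fin 1) R[X]), φ ((P * Q * T) 0 0) = ((P.map φ) * (Q.map φ) * (T.map φ)) 0 0 := by
    intro P Q T
    rw [← Matrix.map_mul, ← Matrix.map_mul]
    rfl
  rw [hmapmul] at h2
  have hCφ : ∀ (p : ℕ) (q : ℕ) (N : Matrix (Fin p) (Fin q) R), (N.map C).map φ = N := by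
    intro p q N
    ext i j
    simp [φ]
  have hadj : ((M'.adjugate).map φ) = M.adjugate := by
    rw [← RingHom.mapMatrix_apply, RingHom.map_adjugate, RingHom.mapMatrix_apply, hM']
  rw [hM', hCφ, hCφ, hCφ, hadj] at h2
  have hx : φ ((x.map C) 0 0) = x 0 0 := by simp [φ, Matrix.map_apply]
  simp only [φ, coe_evalRingHom, Matrix.map_apply, eval_C] at h2
  exact h2

private lemma det_submatrix_mem {m n : ℕ} (A : Matrix (Fin m) (Fin n) R) {l : ℕ}
    (f : Fin l → Fin m) (g : Fin l → Fin n) :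
    (A.submatrix f g).det ∈ detIdeal l A := by
  by_cases hf : Function.Injective f
  · by_cases hg : Function.Injective g
    · set σ := Tuple.sort f with hσ
      set τ := Tuple.sort g with hτ
      have hfs : StrictMono (f ∘ σ) :=
        (Tuple.monotone_sort f).strictMono_of_injective (hf.comp σ.injective)
      have hgs : StrictMono (g ∘ τ) :=
        (Tuple.monotone_sort g).strictMono_of_injective (hg.comp τ.injective)
      have hmem : (A.submatrix (f ∘ σ) (g ∘ τ)).det ∈ detIdeal l A :=
        Ideal.subset_span ⟨f ∘ σ, g ∘ τ, hfs, hgs, rfl⟩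
      have key : A.submatrix f g
          = ((A.submatrix (f ∘ σ) (g ∘ τ)).submatrix σ.symm id).submatrix id τ.symm := by
        ext i j
        simp [Matrix.submatrix_apply]
      rw [key, Matrix.det_permute', Matrix.det_permute]
      exact Ideal.mul_mem_left _ _ (Ideal.mul_mem_left _ _ hmem)
    · obtain ⟨a, b, hab, hne⟩ := Function.not_injective_iff.mp hg
      have : (A.submatrix f g).det = 0 :=
        Matrix.det_zero_of_column_eq hne (fun p => by simp [hab])
      rw [this]; exact Ideal.zero_mem _
  · obtain ⟨a, b, hab, hne⟩ := Function.not_injective_iff.mp hf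
    have : (A.submatrix f g).det = 0 :=
      Matrix.det_zero_of_row_eq hne (by funext p; simp [hab])
    rw [this]; exact Ideal.zero_mem _

end Aux

theorem stmt0 {R : Type*} [CommRing R] {m n k : ℕ} (hk : 1 ≤ k)
    (A : Matrix (Fin m) (Fin n) R)
    (α : Fin k → Fin m) (β : Fin k → Fin n) (hα : StrictMono α) (hβ : StrictMono β) :
    ∀ i j, ((A.submatrix α β).det • A - A * adjSub A α β * A) i j ∈ detIdeal (k + 1) A := by
  intro i j
  classical
  set M := A.submatrix α β with hM
  set r : Matrix (Fin k) (Fin 1) R := Matrix.of fun a _ => A (α a) j with hr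
  set c : Matrix (Fin 1) (Fin k) R := Matrix.of fun _ b => A i (β b) with hc
  set x : Matrix (Fin 1) (Fin 1) R := Matrix.of fun _ _ => A i j with hx
  have h1 : A * ((1 : Matrix (Fin n) (Fin n) R).submatrix id β) = A.submatrix id β := by
    ext p q
    simp [Matrix.mul_apply, Matrix.one_apply]
  have h2 : ((1 : Matrix (Fin m) (Fin m) R).submatrix α id) * A = A.submatrix α id := by
    ext p q
    simp [Matrix.mul_apply, Matrix.one_apply]
  have hprod : A * adjSub A α β * A = A.submatrix id β * M.adjugate * A.submatrix α id := by
    unfold adjSub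
    rw [← hM]
    rw [show A * ((1 : Matrix (Fin n) (Fin n) R).submatrix id β * M.adjugate *
        (1 : Matrix (Fin m) (Fin m) R).submatrix α id) * A
      = (A * (1 : Matrix (Fin n) (Fin n) R).submatrix id β) * M.adjugate *
        (((1 : Matrix (Fin m) (Fin m) R).submatrix α id) * A) by
      simp only [Matrix.mul_assoc]]
    rw [h1, h2]
  have hentry : (A.submatrix id β * M.adjugate * A.submatrix α id) i j
      = (c * M.adjugate * r) 0 0 := by
    simp [Matrix.mul_apply, hc, hr]
  have hdet : ((A.submatrix α β).det • A - A * adjSub A α β * A) i j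
      = (Matrix.fromBlocks M r c x).det := by
    rw [bordered]
    simp only [Matrix.sub_apply, Matrix.smul_apply, smul_eq_mul, hprod, hentry]
    rw [hx]
    simp [mul_comm]
    rfl
  rw [hdet]
  set F : Fin (k + 1) → Fin m := (Sum.elim α fun _ => i) ∘ finSumFinEquiv.symm with hF
  set G : Fin (k + 1) → Fin n := (Sum.elim β fun _ => j) ∘ finSumFinEquiv.symm with hG
  have hB : Matrix.fromBlocks M r c x
      = (A.submatrix F G).submatrix finSumFinEquiv finSumFinEquiv := by
    ext p q
    rcases p with a | a <;> rcases q with b | b <;>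
      simp [hF, hG, hM, hr, hc, hx]
  rw [hB, Matrix.det_submatrix_equiv_self]
  exact det_submatrix_mem A F G
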